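/- Let M be an n × n 0,1 matrix with k = Rbin(M), and define the graph H on vertex set [n] × [n] (loops allowed) in which vertices (i₁,j₁) and (i₂,j₂) (not necessarily distinct) are adjacent iff M_{i₁,j₂} = 1 or M_{i₂,j₁} = 1. Then there exist pairs of vertex sets (A_t, B_t) for t ∈ [k], each a biclique of H, such that for every ordered pair of vertices ((i₁,j₁),(i₂,j₂)) ∈ ([n]×[n])², the number of indices t ∈ [k] with ((i₁,j₁),(i₂,j₂)) ∈ A_t × B_t equals M_{i₁,j₂}. In particular, this collection is a 2-biclique covering of H of size k in which an edge between distinct adjacent vertices (i₁,j₁),(i₂,j₂) is covered twice, in the two opposite orientations, if both M_{i₁,j₂} = 1 and M_{i₂,j₁} = 1 hold, and covered once if only one of them holds, and every loop of H is covered once. -/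

import Mathlib

/-- A partition of the ones of a `0,1` matrix `M` into `k` monochromatic
combinatorial rectangles `A t × B t`. -/
def OnesPartition {α β : Type*} (M : α → β → Bool) (k : ℕ)
    (A : Fin k → Set α) (B : Fin k → Set β) : Prop :=
  (∀ t, ∀ x ∈ A t, ∀ y ∈ B t, M x y = true) ∧
  ∀ x y, M x y = true → ∃! t, x ∈ A t ∧ y ∈ B t

/-- The binary rank of a `0,1` matrix. -/
noncomputable def Rbin {α β : Type*} (M : α → β → Bool) : ℕ :=
  sInf {k | ∃ A B, OnesPartition M k A B}

/-- Let `H` be the graph (loops allowed) on `[n] × [n]` in which `(i₁,j₁)` and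
`(i₂,j₂)` (not necessarily distinct) are adjacent iff `M_{i₁,j₂} = 1` or
`M_{i₂,j₁} = 1`. Then, with `k = Rbin M`, there are vertex-set pairs
`(A t, B t)`, `t < k`, each a biclique of `H`, such that for every ordered pair
of vertices `(p, q)` the number of indices `t` with `(p, q) ∈ A t × B t` equals
`M_{p.1, q.2}` (in particular, the collection is a `2`-biclique covering of `H`
of size `k` covering each edge once or twice according to whether one or both of
`M_{i₁,j₂} = 1`, `M_{i₂,j₁} = 1` hold, and covering every loop once). -/
theorem stmt14 (n : ℕ) (M : Fin n → Fin n → Bool) :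
    ∃ A B : Fin (Rbin M) → Finset (Fin n × Fin n),
      (∀ t, ∀ p ∈ A t, ∀ q ∈ B t,
        M p.1 q.2 = true ∨ M q.1 p.2 = true) ∧
      ∀ p q : Fin n × Fin n,
        (Finset.univ.filter fun t => p ∈ A t ∧ q ∈ B t).card
          = (M p.1 q.2).toNat := by
  classical
  -- The set of achievable k is nonempty: partition into singletons.
  have hne : {k | ∃ A B, OnesPartition M k A B}.Nonempty := by
    set S : Finset (Fin n × Fin n) := Finset.univ.filter (fun p => M p.1 p.2 = true) with hS
    obtain ⟨e⟩ : Nonempty (Fin S.card ≃ {x // x ∈ S}) := ⟨S.equivFin.symm⟩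
    refine ⟨S.card, fun t => {((e t : Fin n × Fin n)).1},
      fun t => {((e t : Fin n × Fin n)).2}, ?_, ?_⟩
    · intro t x hx y hy
      simp only [Set.mem_singleton_iff] at hx hy
      subst hx; subst hy
      exact (Finset.mem_filter.mp (e t).2).2
    · intro x y hxy
      have hmem : (x, y) ∈ S := by simp [hS, hxy]
      refine ⟨e.symm ⟨(x, y), hmem⟩, ?_, ?_⟩
      · simp
      · intro t ht
        simp only [Set.mem_singleton_iff] at ht
        have : (e t : Fin n × Fin n) = (x, y) := by
          rw [Prod.ext_iff]; exact ⟨ht.1.symm, ht.2.symm⟩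
        have : e t = ⟨(x, y), hmem⟩ := Subtype.ext this
        rw [← this, Equiv.symm_apply_apply]
  obtain ⟨A₀, B₀, hmono, huniq⟩ := Nat.sInf_mem hne
  refine ⟨fun t => Finset.univ.filter (fun p => p.1 ∈ A₀ t),
    fun t => Finset.univ.filter (fun p => p.2 ∈ B₀ t), ?_, ?_⟩
  · intro t p hp q hq
    simp only [Finset.mem_filter] at hp hq
    exact Or.inl (hmono t _ hp.2 _ hq.2)
  · intro p q
    simp only [Finset.mem_filter, Finset.mem_univ, true_and]
    rcases h : M p.1 q.2 with _ | _
    · simp only [Bool.toNat_false, Finset.card_eq_zero, Finset.filter_eq_empty_iff]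
      intro t _ ht
      exact absurd (hmono t _ ht.1 _ ht.2) (by simp [h])
    · simp only [Bool.toNat_true]
      obtain ⟨t, ht, htu⟩ := huniq p.1 q.2 h
      rw [Finset.card_eq_one]
      exact ⟨t, Finset.eq_singleton_iff_unique_mem.2
        ⟨Finset.mem_filter.2 ⟨Finset.mem_univ _, ht⟩, fun s hs => htu s (by simpa using hs)⟩⟩
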